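/- Under the contextual bandit setup with ratio bound ν(a|x)/μ̂_k(a|x) ≤ M, the conditional variance of the doubly robust term V̂_k is upper bounded by Var_{x∼D}[ r*(x,ν) ] + 2·E_{(x,a)∼ν}[ |(1−ρ_k(x,a))·Δ(x,a)| ] + M·E_{(x,a)∼ν}[ ρ_k(x,a)·E_{r∼D(·|x,a)}[(r − r̂(x,a))²] ], where r*(x,ν) = Σ_a ν(a|x) r*(x,a). -/
import Mathlib


open Finset

/-- Upper bound on the conditional variance of the doubly robust term `V̂_k`. -/
theorem stmt3 {X A R : Type*} [Fintype X] [Fintype A] [Fintype R]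
    (D : X → ℝ) (nu : X → A → ℝ) (mu : X → A → ℝ)
    (Dr : X → A → R → ℝ) (rval : R → ℝ)
    (rhat : X → A → ℝ) (muhat : X → A → ℝ) (M : ℝ)
    (hD0 : ∀ x, 0 ≤ D x) (hD1 : ∑ x, D x = 1)
    (hnu0 : ∀ x a, 0 ≤ nu x a) (hnu1 : ∀ x, ∑ a, nu x a = 1)
    (hmu0 : ∀ x a, 0 ≤ mu x a) (hmu1 : ∀ x, ∑ a, mu x a = 1)
    (hDr0 : ∀ x a r, 0 ≤ Dr x a r) (hDr1 : ∀ x a, ∑ r, Dr x a r = 1)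
    (hrval0 : ∀ r, 0 ≤ rval r) (hrval1 : ∀ r, rval r ≤ 1)
    (hrhat0 : ∀ x a, 0 ≤ rhat x a) (hrhat1 : ∀ x a, rhat x a ≤ 1)
    (hmuhat : ∀ x a, 0 < muhat x a)
    (hpos : ∀ x a, 0 < nu x a → 0 < mu x a)
    (hM : ∀ x a, nu x a / muhat x a ≤ M)
    (rstar : X → A → ℝ) (hrstar : ∀ x a, rstar x a = ∑ r, Dr x a r * rval r)
    (Δ : X → A → ℝ) (hΔ : ∀ x a, Δ x a = rhat x a - rstar x a)
    (ρ : X → A → ℝ) (hρ : ∀ x a, ρ x a = mu x a / muhat x a)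
    (rnux : X → ℝ) (hrnux : ∀ x, rnux x = ∑ a, nu x a * rstar x a)
    (Vhat : X → A → R → ℝ)
    (hVhat : ∀ x a r, Vhat x a r =
      (∑ a', nu x a' * rhat x a') + (nu x a / muhat x a) * (rval r - rhat x a)) :
    (∑ x, ∑ a, ∑ r, D x * (mu x a * (Dr x a r * (Vhat x a r)^2)))
      - (∑ x, ∑ a, ∑ r, D x * (mu x a * (Dr x a r * Vhat x a r)))^2
    ≤ ((∑ x, D x * (rnux x)^2) - (∑ x, D x * rnux x)^2)
      + 2 * (∑ x, ∑ a, D x * (nu x a * |(1 - ρ x a) * Δ x a|))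
      + M * (∑ x, ∑ a, D x * (nu x a * (ρ x a *
          (∑ r, Dr x a r * (rval r - rhat x a)^2)))) := by
  classical
  -- basic bounds
  have hρ0 : ∀ x a, 0 ≤ ρ x a := fun x a => by
    rw [hρ]; exact div_nonneg (hmu0 x a) (hmuhat x a).le
  have hrstar0 : ∀ x a, 0 ≤ rstar x a := fun x a => by
    rw [hrstar]; exact Finset.sum_nonneg fun r _ => mul_nonneg (hDr0 x a r) (hrval0 r)
  have hrstar1 : ∀ x a, rstar x a ≤ 1 := fun x a => by
    rw [hrstar]
    calc ∑ r, Dr x a r * rval r ≤ ∑ r, Dr x a r :=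
          Finset.sum_le_sum fun r _ => mul_le_of_le_one_right (hDr0 x a r) (hrval1 r)
      _ = 1 := hDr1 x a
  have hY0 : ∀ x, 0 ≤ rnux x := fun x => by
    rw [hrnux]; exact Finset.sum_nonneg fun a _ => mul_nonneg (hnu0 x a) (hrstar0 x a)
  have hY1 : ∀ x, rnux x ≤ 1 := fun x => by
    rw [hrnux]
    calc ∑ a, nu x a * rstar x a ≤ ∑ a, nu x a :=
          Finset.sum_le_sum fun a _ => mul_le_of_le_one_right (hnu0 x a) (hrstar1 x a)
      _ = 1 := hnu1 x
  have hS0 : ∀ x, 0 ≤ ∑ a', nu x a' * rhat x a' := fun x =>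
    Finset.sum_nonneg fun a _ => mul_nonneg (hnu0 x a) (hrhat0 x a)
  have hS1 : ∀ x, (∑ a', nu x a' * rhat x a') ≤ 1 := fun x => by
    calc ∑ a', nu x a' * rhat x a' ≤ ∑ a', nu x a' :=
          Finset.sum_le_sum fun a _ => mul_le_of_le_one_right (hnu0 x a) (hrhat1 x a)
      _ = 1 := hnu1 x
  have hm0 : 0 ≤ ∑ x, D x * rnux x :=
    Finset.sum_nonneg fun x _ => mul_nonneg (hD0 x) (hY0 x)
  have hm1 : (∑ x, D x * rnux x) ≤ 1 := by
    calc ∑ x, D x * rnux x ≤ ∑ x, D x :=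
          Finset.sum_le_sum fun x _ => mul_le_of_le_one_right (hD0 x) (hY1 x)
      _ = 1 := hD1
  -- second conditional moment
  have hmom2 : ∀ x, (∑ a, mu x a * ∑ r, Dr x a r * Vhat x a r ^ 2)
      = (∑ a', nu x a' * rhat x a')^2
        - 2 * (∑ a', nu x a' * rhat x a') * (∑ a, nu x a * (ρ x a * Δ x a))
        + ∑ a, mu x a * ((nu x a / muhat x a)^2 * ∑ r, Dr x a r * (rval r - rhat x a)^2) := by
    intro x
    have inner : ∀ a, (∑ r, Dr x a r * Vhat x a r ^ 2)
        = (∑ a', nu x a' * rhat x a')^2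
          + (2 * (∑ a', nu x a' * rhat x a') * (nu x a / muhat x a)) * (rstar x a - rhat x a)
          + (nu x a / muhat x a)^2 * ∑ r, Dr x a r * (rval r - rhat x a)^2 := by
      intro a
      have h1 : ∀ r, Dr x a r * Vhat x a r ^ 2
          = (∑ a', nu x a' * rhat x a')^2 * Dr x a r
            + (2 * (∑ a', nu x a' * rhat x a') * (nu x a / muhat x a)) * (Dr x a r * rval r)
            - (2 * (∑ a', nu x a' * rhat x a') * (nu x a / muhat x a) * rhat x a) * Dr x a r
            + (nu x a / muhat x a)^2 * (Dr x a r * (rval r - rhat x a)^2) := fun r => by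
        rw [hVhat]; ring
      rw [Finset.sum_congr rfl fun r _ => h1 r]
      simp only [Finset.sum_add_distrib, Finset.sum_sub_distrib, ← Finset.mul_sum]
      rw [hDr1 x a, ← hrstar x a]
      ring
    calc (∑ a, mu x a * ∑ r, Dr x a r * Vhat x a r ^ 2)
        = ∑ a, ((∑ a', nu x a' * rhat x a')^2 * mu x a
            - (2 * (∑ a', nu x a' * rhat x a')) * (nu x a * (ρ x a * Δ x a))
            + mu x a * ((nu x a / muhat x a)^2 * ∑ r, Dr x a r * (rval r - rhat x a)^2)) := by
          refine Finset.sum_congr rfl fun a _ => ?_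
          rw [inner a, hρ x a, hΔ x a]; ring
      _ = (∑ a', nu x a' * rhat x a')^2
          - 2 * (∑ a', nu x a' * rhat x a') * (∑ a, nu x a * (ρ x a * Δ x a))
          + ∑ a, mu x a * ((nu x a / muhat x a)^2 * ∑ r, Dr x a r * (rval r - rhat x a)^2) := by
          simp only [Finset.sum_add_distrib, Finset.sum_sub_distrib, ← Finset.mul_sum]
          rw [hmu1 x]; ring
  -- first conditional moment
  have hmom1 : ∀ x, (∑ a, mu x a * ∑ r, Dr x a r * Vhat x a r)
      = rnux x + ∑ a, nu x a * ((1 - ρ x a) * Δ x a) := by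
    intro x
    have inner : ∀ a, (∑ r, Dr x a r * Vhat x a r)
        = (∑ a', nu x a' * rhat x a')
          + (nu x a / muhat x a) * (rstar x a - rhat x a) := by
      intro a
      have h1 : ∀ r, Dr x a r * Vhat x a r
          = (∑ a', nu x a' * rhat x a') * Dr x a r
            + (nu x a / muhat x a) * (Dr x a r * rval r)
            - ((nu x a / muhat x a) * rhat x a) * Dr x a r := fun r => by
        rw [hVhat]; ring
      rw [Finset.sum_congr rfl fun r _ => h1 r]
      simp only [Finset.sum_add_distrib, Finset.sum_sub_distrib, ← Finset.mul_sum]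
      rw [hDr1 x a, ← hrstar x a]
      ring
    calc (∑ a, mu x a * ∑ r, Dr x a r * Vhat x a r)
        = ∑ a, ((∑ a', nu x a' * rhat x a') * mu x a - nu x a * (ρ x a * Δ x a)) := by
          refine Finset.sum_congr rfl fun a _ => ?_
          rw [inner a, hρ x a, hΔ x a]; ring
      _ = (∑ a', nu x a' * rhat x a') * (∑ a, mu x a)
          - ∑ a, nu x a * (ρ x a * Δ x a) := by
          simp only [Finset.sum_sub_distrib, ← Finset.mul_sum]
      _ = rnux x + ∑ a, nu x a * ((1 - ρ x a) * Δ x a) := by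
          rw [hmu1 x, hrnux x, mul_one]
          rw [← Finset.sum_sub_distrib, ← Finset.sum_add_distrib]
          refine Finset.sum_congr rfl fun a _ => ?_
          rw [hΔ x a]; ring
  -- key pointwise identity for the second moment
  have hkey : ∀ x, D x * ((∑ a', nu x a' * rhat x a')^2
        - 2 * (∑ a', nu x a' * rhat x a') * (∑ a, nu x a * (ρ x a * Δ x a))
        + ∑ a, mu x a * ((nu x a / muhat x a)^2 * ∑ r, Dr x a r * (rval r - rhat x a)^2))
      = D x * rnux x ^ 2
        + 2 * (D x * ((∑ a, nu x a * ((1 - ρ x a) * Δ x a)) * (∑ a', nu x a' * rhat x a')))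
        - D x * (∑ a, nu x a * Δ x a)^2
        + D x * (∑ a, mu x a * ((nu x a / muhat x a)^2 * ∑ r, Dr x a r * (rval r - rhat x a)^2)) := by
    intro x
    have hce : (∑ a, nu x a * Δ x a) = (∑ a', nu x a' * rhat x a') - rnux x := by
      rw [hrnux x, ← Finset.sum_sub_distrib]
      refine Finset.sum_congr rfl fun a _ => ?_
      rw [hΔ x a]; ring
    have hee : (∑ a, nu x a * ((1 - ρ x a) * Δ x a))
        = (∑ a, nu x a * Δ x a) - (∑ a, nu x a * (ρ x a * Δ x a)) := by
      rw [← Finset.sum_sub_distrib]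
      refine Finset.sum_congr rfl fun a _ => ?_
      ring
    linear_combination (D x * ((∑ a, nu x a * Δ x a) - (∑ a', nu x a' * rhat x a') - rnux x)) * hce
      + (-2 * D x * (∑ a', nu x a' * rhat x a')) * hee
  -- fold the goal
  simp only [← Finset.mul_sum]
  have g2 : (∑ x, D x * ∑ a, mu x a * ∑ r, Dr x a r * Vhat x a r ^ 2)
      = (∑ x, D x * rnux x ^ 2)
        + 2 * (∑ x, D x * ((∑ a, nu x a * ((1 - ρ x a) * Δ x a)) * (∑ a', nu x a' * rhat x a')))
        - (∑ x, D x * (∑ a, nu x a * Δ x a)^2)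
        + (∑ x, D x * (∑ a, mu x a * ((nu x a / muhat x a)^2 * ∑ r, Dr x a r * (rval r - rhat x a)^2))) := by
    calc (∑ x, D x * ∑ a, mu x a * ∑ r, Dr x a r * Vhat x a r ^ 2)
        = ∑ x, (D x * rnux x ^ 2
            + 2 * (D x * ((∑ a, nu x a * ((1 - ρ x a) * Δ x a)) * (∑ a', nu x a' * rhat x a')))
            - D x * (∑ a, nu x a * Δ x a)^2
            + D x * (∑ a, mu x a * ((nu x a / muhat x a)^2 * ∑ r, Dr x a r * (rval r - rhat x a)^2))) := by
          refine Finset.sum_congr rfl fun x _ => ?_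
          rw [hmom2 x]; exact hkey x
      _ = _ := by
          simp only [Finset.sum_add_distrib, Finset.sum_sub_distrib, ← Finset.mul_sum]
  have g1 : (∑ x, D x * ∑ a, mu x a * ∑ r, Dr x a r * Vhat x a r)
      = (∑ x, D x * rnux x) + ∑ x, D x * (∑ a, nu x a * ((1 - ρ x a) * Δ x a)) := by
    calc (∑ x, D x * ∑ a, mu x a * ∑ r, Dr x a r * Vhat x a r)
        = ∑ x, (D x * rnux x + D x * (∑ a, nu x a * ((1 - ρ x a) * Δ x a))) := by
          refine Finset.sum_congr rfl fun x _ => ?_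
          rw [hmom1 x]; ring
      _ = _ := by
          simp only [Finset.sum_add_distrib]
  rw [g2, g1]
  -- abbreviations for the scalar sums
  set m : ℝ := ∑ x, D x * rnux x with hmdef
  -- pointwise bound e (S - m) ≤ T
  have hpointT : ∀ x, D x * ((∑ a, nu x a * ((1 - ρ x a) * Δ x a)) * (∑ a', nu x a' * rhat x a'))
      ≤ D x * (∑ a, nu x a * |(1 - ρ x a) * Δ x a|)
        + m * (D x * (∑ a, nu x a * ((1 - ρ x a) * Δ x a))) := by
    intro x
    have habs : |∑ a, nu x a * ((1 - ρ x a) * Δ x a)| ≤ ∑ a, nu x a * |(1 - ρ x a) * Δ x a| := by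
      calc |∑ a, nu x a * ((1 - ρ x a) * Δ x a)| ≤ ∑ a, |nu x a * ((1 - ρ x a) * Δ x a)| :=
            Finset.abs_sum_le_sum_abs _ _
        _ = ∑ a, nu x a * |(1 - ρ x a) * Δ x a| := by
            refine Finset.sum_congr rfl fun a _ => ?_
            rw [abs_mul, abs_of_nonneg (hnu0 x a)]
      
    have habs' := abs_le.mp habs
    have h1 : (∑ a, nu x a * ((1 - ρ x a) * Δ x a))
        * ((∑ a', nu x a' * rhat x a') - m) ≤ (∑ a, nu x a * |(1 - ρ x a) * Δ x a|) := by
      have hA : 0 ≤ ((∑ a, nu x a * |(1 - ρ x a) * Δ x a|) - (∑ a, nu x a * ((1 - ρ x a) * Δ x a)))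
          * (1 + ((∑ a', nu x a' * rhat x a') - m)) := by
        apply mul_nonneg
        · linarith [habs'.2]
        · linarith [hS0 x, hm1]
      have hB : 0 ≤ ((∑ a, nu x a * |(1 - ρ x a) * Δ x a|) + (∑ a, nu x a * ((1 - ρ x a) * Δ x a)))
          * (1 - ((∑ a', nu x a' * rhat x a') - m)) := by
        apply mul_nonneg
        · linarith [habs'.1]
        · linarith [hS1 x, hm0]
      nlinarith [hA, hB]
    nlinarith [mul_le_mul_of_nonneg_left h1 (hD0 x)]
  have hTsum : (∑ x, D x * ((∑ a, nu x a * ((1 - ρ x a) * Δ x a)) * (∑ a', nu x a' * rhat x a')))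
      ≤ (∑ x, D x * (∑ a, nu x a * |(1 - ρ x a) * Δ x a|))
        + m * (∑ x, D x * (∑ a, nu x a * ((1 - ρ x a) * Δ x a))) := by
    calc (∑ x, D x * ((∑ a, nu x a * ((1 - ρ x a) * Δ x a)) * (∑ a', nu x a' * rhat x a')))
        ≤ ∑ x, (D x * (∑ a, nu x a * |(1 - ρ x a) * Δ x a|)
            + m * (D x * (∑ a, nu x a * ((1 - ρ x a) * Δ x a)))) :=
          Finset.sum_le_sum fun x _ => hpointT x
      _ = _ := by
          simp only [Finset.sum_add_distrib, ← Finset.mul_sum]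
  -- variance term bound by M
  have hqsum : (∑ x, D x * (∑ a, mu x a * ((nu x a / muhat x a)^2 * ∑ r, Dr x a r * (rval r - rhat x a)^2)))
      ≤ M * (∑ x, D x * (∑ a, nu x a * (ρ x a * ∑ r, Dr x a r * (rval r - rhat x a)^2))) := by
    have hpq : ∀ x, (∑ a, mu x a * ((nu x a / muhat x a)^2 * ∑ r, Dr x a r * (rval r - rhat x a)^2))
        ≤ M * (∑ a, nu x a * (ρ x a * ∑ r, Dr x a r * (rval r - rhat x a)^2)) := by
      intro x
      rw [Finset.mul_sum]
      refine Finset.sum_le_sum fun a _ => ?_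
      have hE2 : 0 ≤ ∑ r, Dr x a r * (rval r - rhat x a)^2 :=
        Finset.sum_nonneg fun r _ => mul_nonneg (hDr0 x a r) (sq_nonneg _)
      have h0 : 0 ≤ nu x a * (ρ x a * ∑ r, Dr x a r * (rval r - rhat x a)^2) :=
        mul_nonneg (hnu0 x a) (mul_nonneg (hρ0 x a) hE2)
      calc mu x a * ((nu x a / muhat x a)^2 * ∑ r, Dr x a r * (rval r - rhat x a)^2)
          = (nu x a / muhat x a) * (nu x a * (ρ x a * ∑ r, Dr x a r * (rval r - rhat x a)^2)) := by
            rw [hρ x a]; ring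
        _ ≤ M * (nu x a * (ρ x a * ∑ r, Dr x a r * (rval r - rhat x a)^2)) :=
            mul_le_mul_of_nonneg_right (hM x a) h0
    calc (∑ x, D x * (∑ a, mu x a * ((nu x a / muhat x a)^2 * ∑ r, Dr x a r * (rval r - rhat x a)^2)))
        ≤ ∑ x, D x * (M * (∑ a, nu x a * (ρ x a * ∑ r, Dr x a r * (rval r - rhat x a)^2))) :=
          Finset.sum_le_sum fun x _ => mul_le_mul_of_nonneg_left (hpq x) (hD0 x)
      _ = M * (∑ x, D x * (∑ a, nu x a * (ρ x a * ∑ r, Dr x a r * (rval r - rhat x a)^2))) := by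
          rw [Finset.mul_sum]
          refine Finset.sum_congr rfl fun x _ => ?_
          ring
  have hc2 : 0 ≤ ∑ x, D x * (∑ a, nu x a * Δ x a)^2 :=
    Finset.sum_nonneg fun x _ => mul_nonneg (hD0 x) (sq_nonneg _)
  have he2 : (0:ℝ) ≤ (∑ x, D x * (∑ a, nu x a * ((1 - ρ x a) * Δ x a)))^2 := sq_nonneg _
  nlinarith [hTsum, hqsum, hc2, he2]
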